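/- For any discrete random vector X = (X_1,...,X_n), the average entropy function h = (h_1,...,h_n), with convention h_0 = 0 and h_{n+1} = h_n, satisfies the second-order difference inequalities h_{m-1} - 2h_m + h_{m+1} ≤ 0 for all m = 1,...,n; i.e., the sequence h_m is concave and nondecreasing. -/

import Mathlib

open Finset Real

/-- Joint Shannon entropy (natural log) of the coordinates in `α` of the random
vector `X` defined on a finite sample space `Ω` with probability mass `p`. -/
noncomputable def jointEntropy {Ω E : Type*} [Fintype Ω] [Fintype E] [DecidableEq E] {n : ℕ}
    (p : Ω → ℝ) (X : Fin n → Ω → E) (α : Finset (Fin n)) : ℝ :=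
  ∑ y : α → E, Real.negMulLog (∑ ω ∈ univ.filter (fun ω => ∀ i : α, X i ω = y i), p ω)


section Abstract
variable {Ω T S : Type*} [Fintype Ω] [Fintype T] [Fintype S] [DecidableEq T] [DecidableEq S]

noncomputable def pmass (p : Ω → ℝ) (f : Ω → T) (t : T) : ℝ :=
  ∑ ω ∈ univ.filter (fun ω => f ω = t), p ω

noncomputable def ent (p : Ω → ℝ) (f : Ω → T) : ℝ := ∑ t, Real.negMulLog (pmass p f t)

set_option linter.unusedSectionVars false in
lemma pmass_nonneg {p : Ω → ℝ} (hp0 : ∀ ω, 0 ≤ p ω) (f : Ω → T) (t : T) : 0 ≤ pmass p f t :=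
  Finset.sum_nonneg fun ω _ => hp0 ω

lemma sum_pmass {p : Ω → ℝ} (hp1 : ∑ ω, p ω = 1) (f : Ω → T) : ∑ t, pmass p f t = 1 := by
  rw [← hp1]; exact Finset.sum_fiberwise _ _ _

set_option linter.unusedSectionVars false

lemma pmass_comp (p : Ω → ℝ) (u : T → S) (f : Ω → T) (s : S) :
    pmass p (fun ω => u (f ω)) s = ∑ t ∈ univ.filter (fun t => u t = s), pmass p f t := by
  unfold pmass
  rw [Finset.sum_fiberwise_eq_sum_filter]
  apply Finset.sum_congr
  · ext ω; simp
  · intros; rfl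

/-- superadditivity of negMulLog -/
lemma negMulLog_sum_le {ι : Type*} (s : Finset ι) (f : ι → ℝ) (hf : ∀ i ∈ s, 0 ≤ f i) :
    Real.negMulLog (∑ i ∈ s, f i) ≤ ∑ i ∈ s, Real.negMulLog (f i) := by
  have key : ∑ i ∈ s, f i * Real.log (f i) ≤ (∑ i ∈ s, f i) * Real.log (∑ i ∈ s, f i) := by
    rcases eq_or_lt_of_le (Finset.sum_nonneg hf) with hs0 | hs0
    · have hz : ∀ i ∈ s, f i = 0 := (Finset.sum_eq_zero_iff_of_nonneg hf).1 hs0.symm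
      rw [Finset.sum_congr rfl fun i hi => by rw [hz i hi, zero_mul], ← hs0]
      simp
    · rw [Finset.sum_mul]
      apply Finset.sum_le_sum
      intro i hi
      rcases eq_or_lt_of_le (hf i hi) with h0 | h0
      · simp [← h0]
      · exact mul_le_mul_of_nonneg_left
          (Real.log_le_log h0 (Finset.single_le_sum hf hi)) (hf i hi)
  have e1 : Real.negMulLog (∑ i ∈ s, f i) = -((∑ i ∈ s, f i) * Real.log (∑ i ∈ s, f i)) := by
    simp [Real.negMulLog]
  have e2 : ∑ i ∈ s, Real.negMulLog (f i) = -(∑ i ∈ s, f i * Real.log (f i)) := by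
    simp [Real.negMulLog]
  rw [e1, e2]
  linarith

lemma ent_comp_le {p : Ω → ℝ} (hp0 : ∀ ω, 0 ≤ p ω) (u : T → S) (f : Ω → T) :
    ent p (fun ω => u (f ω)) ≤ ent p f := by
  unfold ent
  calc ∑ s, Real.negMulLog (pmass p (fun ω => u (f ω)) s)
      ≤ ∑ s, ∑ t ∈ univ.filter (fun t => u t = s), Real.negMulLog (pmass p f t) := by
        apply Finset.sum_le_sum
        intro s _
        rw [pmass_comp p u f s]
        exact negMulLog_sum_le _ _ fun t _ => pmass_nonneg hp0 f t
    _ = ∑ t, Real.negMulLog (pmass p f t) := Finset.sum_fiberwise _ _ _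

lemma ent_eq_of_comp {p : Ω → ℝ} (hp0 : ∀ ω, 0 ≤ p ω) (u : T → S) (v : S → T)
    (f : Ω → T) (g : Ω → S)
    (hu : ∀ ω, u (f ω) = g ω) (hv : ∀ ω, v (g ω) = f ω) : ent p f = ent p g := by
  have h1 : ent p (fun ω => u (f ω)) ≤ ent p f := ent_comp_le hp0 u f
  have h2 : ent p (fun ω => v (g ω)) ≤ ent p g := ent_comp_le hp0 v g
  simp only [funext hu] at h1
  simp only [funext hv] at h2
  exact le_antisymm h2 h1

end Abstract

section Gibbs

lemma gibbs {ι : Type*} [Fintype ι] (c q : ι → ℝ) (hc : ∀ i, 0 ≤ c i) (hq : ∀ i, 0 ≤ q i)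
    (hcq : ∀ i, 0 < c i → 0 < q i) (hsum : ∑ i, q i ≤ ∑ i, c i) :
    ∑ i, c i * Real.log (q i) ≤ ∑ i, c i * Real.log (c i) := by
  have pointwise : ∀ i, c i * Real.log (q i) - c i * Real.log (c i) ≤ q i - c i := by
    intro i
    rcases eq_or_lt_of_le (hc i) with h0 | h0
    · rw [← h0]; simp [hq i]
    · have hqi := hcq i h0
      have hl := Real.log_le_sub_one_of_pos (div_pos hqi h0)
      rw [Real.log_div hqi.ne' h0.ne'] at hl
      have h2 := mul_le_mul_of_nonneg_left hl h0.le
      rw [mul_sub, mul_sub] at h2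
      have h3 : c i * (q i / c i) = q i := by field_simp
      rw [h3] at h2
      linarith
  have := Finset.sum_le_sum (fun i (_ : i ∈ Finset.univ) => pointwise i)
  rw [Finset.sum_sub_distrib, Finset.sum_sub_distrib] at this
  linarith

end Gibbs

section Submod
variable {Ω : Type*} [Fintype Ω]

lemma ent_eq_neg_sum {T : Type*} [Fintype T] [DecidableEq T] (p : Ω → ℝ) (f : Ω → T) :
    ent p f = -∑ t, pmass p f t * Real.log (pmass p f t) := by
  simp [ent, Real.negMulLog]

lemma ent_submod {A B C : Type*} [Fintype A] [Fintype B] [Fintype C]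
    [DecidableEq A] [DecidableEq B] [DecidableEq C]
    {p : Ω → ℝ} (hp0 : ∀ ω, 0 ≤ p ω) (hp1 : ∑ ω, p ω = 1)
    (g : Ω → A) (h : Ω → B) (u : A → C) (v : B → C) (huv : ∀ ω, u (g ω) = v (h ω)) :
    ent p (fun ω => (g ω, h ω)) + ent p (fun ω => u (g ω)) ≤ ent p g + ent p h := by
  set c : A × B → ℝ := pmass p (fun ω => (g ω, h ω)) with hc_def
  set PG : A → ℝ := pmass p g with hPG_def
  set PH : B → ℝ := pmass p h with hPH_def
  set PK : C → ℝ := pmass p (fun ω => u (g ω)) with hPK_def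
  have hKv : (fun ω => u (g ω)) = (fun ω => v (h ω)) := funext huv
  -- fiber facts
  have F1 : ∀ a, PG a = ∑ b, c (a, b) := by
    intro a
    rw [hPG_def, pmass, ← Finset.sum_fiberwise (Finset.univ.filter (fun ω => g ω = a)) h p]
    apply Finset.sum_congr rfl
    intro b _
    rw [hc_def, pmass, Finset.filter_filter]
    apply Finset.sum_congr _ (fun _ _ => rfl)
    ext ω; simp [Prod.ext_iff, and_comm]
  have F2 : ∀ b, PH b = ∑ a, c (a, b) := by
    intro b
    rw [hPH_def, pmass, ← Finset.sum_fiberwise (Finset.univ.filter (fun ω => h ω = b)) g p]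
    apply Finset.sum_congr rfl
    intro a _
    rw [hc_def, pmass, Finset.filter_filter]
    apply Finset.sum_congr _ (fun _ _ => rfl)
    ext ω; simp [Prod.ext_iff, and_comm]
  have F3 : ∀ k, PK k = ∑ a ∈ Finset.univ.filter (fun a => u a = k), PG a :=
    fun k => pmass_comp p u g k
  have F3' : ∀ k, PK k = ∑ b ∈ Finset.univ.filter (fun b => v b = k), PH b := by
    intro k
    rw [hPK_def, hKv]
    exact pmass_comp p v h k
  have hc0 : ∀ x, 0 ≤ c x := pmass_nonneg hp0 _
  have hPG0 : ∀ a, 0 ≤ PG a := pmass_nonneg hp0 _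
  have hPH0 : ∀ b, 0 ≤ PH b := pmass_nonneg hp0 _
  have hPK0 : ∀ k, 0 ≤ PK k := pmass_nonneg hp0 _
  have F4 : ∀ a b, c (a, b) ≤ PK (u a) := by
    intro a b
    apply Finset.sum_le_sum_of_subset_of_nonneg
    · intro ω hω
      simp only [Finset.mem_filter, Finset.mem_univ, true_and, Prod.ext_iff] at hω ⊢
      rw [hω.1]
    · exact fun ω _ _ => hp0 ω
  have F5 : ∀ a b, c (a, b) ≤ PG a := by
    intro a b
    apply Finset.sum_le_sum_of_subset_of_nonneg
    · intro ω hω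
      simp only [Finset.mem_filter, Finset.mem_univ, true_and, Prod.ext_iff] at hω ⊢
      exact hω.1
    · exact fun ω _ _ => hp0 ω
  have F6 : ∀ a b, c (a, b) ≤ PH b := by
    intro a b
    apply Finset.sum_le_sum_of_subset_of_nonneg
    · intro ω hω
      simp only [Finset.mem_filter, Finset.mem_univ, true_and, Prod.ext_iff] at hω ⊢
      exact hω.2
    · exact fun ω _ _ => hp0 ω
  have Fex : ∀ a b, 0 < c (a, b) → ∃ ω, g ω = a ∧ h ω = b := by
    intro a b hpos
    by_contra hno
    push_neg at hno
    have : c (a, b) = 0 := by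
      rw [hc_def, pmass]
      apply Finset.sum_eq_zero
      intro ω hω
      simp only [Finset.mem_filter, Finset.mem_univ, true_and, Prod.ext_iff] at hω
      exact absurd hω.2 (hno ω hω.1)
    rw [this] at hpos; exact lt_irrefl 0 hpos
  set q : A × B → ℝ := fun x => if u x.1 = v x.2 then PG x.1 * PH x.2 / PK (u x.1) else 0
    with hq_def
  have hq0 : ∀ x, 0 ≤ q x := by
    intro x
    rw [hq_def]
    dsimp only
    split
    · exact div_nonneg (mul_nonneg (hPG0 _) (hPH0 _)) (hPK0 _)
    · exact le_refl 0
  have hqsum : ∑ x, q x ≤ ∑ x, c x := by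
    have hcs : ∑ x, c x = 1 := sum_pmass hp1 _
    rw [hcs, Fintype.sum_prod_type]
    have inner : ∀ a, ∑ b, q (a, b) ≤ PG a := by
      intro a
      have : ∑ b, q (a, b)
          = (∑ b ∈ Finset.univ.filter (fun b => v b = u a), PH b) * PG a / PK (u a) := by
        rw [Finset.sum_filter, Finset.sum_mul, Finset.sum_div]
        apply Finset.sum_congr rfl
        intro b _
        rw [hq_def]
        dsimp only
        by_cases hb : u a = v b
        · rw [if_pos hb, if_pos hb.symm]; ring
        · rw [if_neg hb, if_neg (Ne.symm hb)]; simp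
      rw [this, ← F3']
      by_cases hk : PK (u a) = 0
      · rw [hk]; simp [hPG0 a]
      · rw [mul_comm, mul_div_assoc, div_self hk, mul_one]
    calc ∑ a, ∑ b, q (a, b) ≤ ∑ a, PG a := Finset.sum_le_sum fun a _ => inner a
      _ = 1 := sum_pmass hp1 _
  have hcq : ∀ x, 0 < c x → 0 < q x := by
    rintro ⟨a, b⟩ hpos
    obtain ⟨ω, hga, hhb⟩ := Fex a b hpos
    have huv' : u a = v b := by rw [← hga, ← hhb]; exact huv ω
    rw [hq_def]
    dsimp only
    rw [if_pos huv']
    exact div_pos (mul_pos (lt_of_lt_of_le hpos (F5 a b)) (lt_of_lt_of_le hpos (F6 a b)))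
      (lt_of_lt_of_le hpos (F4 a b))
  -- sum identities
  have G1 : ∑ a, PG a * Real.log (PG a) = ∑ x : A × B, c x * Real.log (PG x.1) := by
    rw [Fintype.sum_prod_type]
    apply Finset.sum_congr rfl
    intro a _
    nth_rewrite 1 [F1 a]
    rw [Finset.sum_mul]
  have G2 : ∑ b, PH b * Real.log (PH b) = ∑ x : A × B, c x * Real.log (PH x.2) := by
    rw [Fintype.sum_prod_type_right]
    apply Finset.sum_congr rfl
    intro b _
    nth_rewrite 1 [F2 b]
    rw [Finset.sum_mul]
  have G3 : ∑ k, PK k * Real.log (PK k) = ∑ x : A × B, c x * Real.log (PK (u x.1)) := by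
    have step1 : ∑ k, PK k * Real.log (PK k) = ∑ a, PG a * Real.log (PK (u a)) := by
      rw [← Finset.sum_fiberwise Finset.univ u (fun a => PG a * Real.log (PK (u a)))]
      apply Finset.sum_congr rfl
      intro k _
      rw [F3 k, Finset.sum_mul]
      apply Finset.sum_congr rfl
      intro a ha
      simp only [Finset.mem_filter] at ha
      rw [ha.2, ← F3 k]
    rw [step1, Fintype.sum_prod_type]
    apply Finset.sum_congr rfl
    intro a _
    nth_rewrite 1 [F1 a]
    rw [Finset.sum_mul]
  have pointwise : ∀ x : A × B,
      c x * Real.log (q x) = c x * Real.log (PG x.1) + c x * Real.log (PH x.2)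
        - c x * Real.log (PK (u x.1)) := by
    rintro ⟨a, b⟩
    rcases eq_or_lt_of_le (hc0 (a, b)) with h0 | h0
    · rw [← h0]; ring
    · obtain ⟨ω, hga, hhb⟩ := Fex a b h0
      have huv' : u a = v b := by rw [← hga, ← hhb]; exact huv ω
      have hG := lt_of_lt_of_le h0 (F5 a b)
      have hH := lt_of_lt_of_le h0 (F6 a b)
      have hK := lt_of_lt_of_le h0 (F4 a b)
      rw [hq_def]
      dsimp only
      rw [if_pos huv', Real.log_div (mul_pos hG hH).ne' hK.ne', Real.log_mul hG.ne' hH.ne']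
      ring
  have main := gibbs c q hc0 hq0 hcq hqsum
  rw [Finset.sum_congr rfl (fun x _ => pointwise x)] at main
  rw [Finset.sum_sub_distrib, Finset.sum_add_distrib] at main
  rw [ent_eq_neg_sum, ent_eq_neg_sum, ent_eq_neg_sum, ent_eq_neg_sum]
  rw [← hc_def, ← hPG_def, ← hPH_def, ← hPK_def]
  rw [G1, G2, G3]
  linarith

end Submod

section Joint
variable {Ω E : Type*} [Fintype Ω] [Fintype E] [DecidableEq E] {n : ℕ}

def projX (X : Fin n → Ω → E) (α : Finset (Fin n)) : Ω → (α → E) := fun ω i => X i ω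

lemma jointEntropy_eq_ent (p : Ω → ℝ) (X : Fin n → Ω → E) (α : Finset (Fin n)) :
    jointEntropy p X α = ent p (projX X α) := by
  unfold jointEntropy ent pmass
  apply Finset.sum_congr rfl
  intro y _
  congr 1
  apply Finset.sum_congr _ (fun _ _ => rfl)
  ext ω
  simp [projX, funext_iff]

set_option maxHeartbeats 1000000 in
lemma jointEntropy_mono (p : Ω → ℝ) (hp0 : ∀ ω, 0 ≤ p ω) (X : Fin n → Ω → E)
    {α β : Finset (Fin n)} (hs : α ⊆ β) :
    jointEntropy p X α ≤ jointEntropy p X β := by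
  rw [jointEntropy_eq_ent, jointEntropy_eq_ent]
  have key := ent_comp_le hp0 (fun (z : β → E) (i : α) => z ⟨i.1, hs i.2⟩) (projX X β)
  have hfact : (fun ω => (fun (z : β → E) (i : α) => z ⟨i.1, hs i.2⟩) (projX X β ω))
      = projX X α := rfl
  rw [hfact] at key
  exact key

set_option maxHeartbeats 1000000 in
lemma jointEntropy_submod (p : Ω → ℝ) (hp0 : ∀ ω, 0 ≤ p ω) (hp1 : ∑ ω, p ω = 1)
    (X : Fin n → Ω → E) (α β : Finset (Fin n)) :
    jointEntropy p X (α ∪ β) + jointEntropy p X (α ∩ β)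
      ≤ jointEntropy p X α + jointEntropy p X β := by
  rw [jointEntropy_eq_ent, jointEntropy_eq_ent, jointEntropy_eq_ent, jointEntropy_eq_ent]
  have hsub := ent_submod hp0 hp1 (projX X α) (projX X β)
      (fun (z : α → E) (i : (α ∩ β : Finset (Fin n))) => z ⟨i.1, (Finset.mem_inter.1 i.2).1⟩)
      (fun (z : β → E) (i : (α ∩ β : Finset (Fin n))) => z ⟨i.1, (Finset.mem_inter.1 i.2).2⟩)
      (fun ω => rfl)
  have hK : (fun ω => (fun (z : α → E) (i : (α ∩ β : Finset (Fin n))) =>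
      z ⟨i.1, (Finset.mem_inter.1 i.2).1⟩) (projX X α ω)) = projX X (α ∩ β) := rfl
  rw [hK] at hsub
  have hpair : ent p (fun ω => (projX X α ω, projX X β ω)) = ent p (projX X (α ∪ β)) := by
    apply Eq.symm
    apply ent_eq_of_comp hp0
      (u := fun (w : (α ∪ β : Finset (Fin n)) → E) =>
        ((fun i : α => w ⟨i.1, Finset.mem_union_left β i.2⟩),
         (fun i : β => w ⟨i.1, Finset.mem_union_right α i.2⟩)))
      (v := fun (x : (α → E) × (β → E)) (i : (α ∪ β : Finset (Fin n))) =>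
        if h : i.1 ∈ α then x.1 ⟨i.1, h⟩
        else x.2 ⟨i.1, (Finset.mem_union.1 i.2).resolve_left h⟩)
    · intro ω; rfl
    · intro ω
      funext i
      by_cases hi : i.1 ∈ α
      · simp only [hi, dif_pos]; rfl
      · simp only [hi, dif_neg, not_false_iff]; rfl
  rw [hpair] at hsub
  linarith

lemma jointEntropy_empty (p : Ω → ℝ) (hp1 : ∑ ω, p ω = 1) (X : Fin n → Ω → E) :
    jointEntropy p X (∅ : Finset (Fin n)) = 0 := by
  unfold jointEntropy
  apply Finset.sum_eq_zero
  intro y _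
  have hfil : (univ.filter (fun ω => ∀ i : ((∅ : Finset (Fin n)) : Finset (Fin n)), X i ω = y i))
      = (univ : Finset Ω) := by
    apply Finset.filter_true_of_mem
    intro ω _
    intro i
    exact absurd i.2 (Finset.notMem_empty _)
  rw [hfil, hp1]
  simp [Real.negMulLog]

end Joint

section Comb

lemma sum_insert_reindex {n : ℕ} (k : ℕ) (F : Finset (Fin n) → ℝ) :
    ∑ A ∈ powersetCard k (univ : Finset (Fin n)), ∑ i ∈ Aᶜ, F (insert i A)
      = ((k : ℝ) + 1) * ∑ B ∈ powersetCard (k + 1) (univ : Finset (Fin n)), F B := by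
  have rhs : ∑ B ∈ powersetCard (k + 1) (univ : Finset (Fin n)), ∑ _i ∈ B, F B
      = ((k : ℝ) + 1) * ∑ B ∈ powersetCard (k + 1) (univ : Finset (Fin n)), F B := by
    rw [Finset.mul_sum]
    apply Finset.sum_congr rfl
    intro B hB
    rw [Finset.sum_const, Finset.mem_powersetCard_univ.1 hB]
    push_cast [nsmul_eq_mul]
    ring
  rw [← rhs, Finset.sum_sigma', Finset.sum_sigma']
  apply Finset.sum_nbij' (i := fun x => (⟨insert x.2 x.1, x.2⟩ : Σ _B : Finset (Fin n), Fin n))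
    (j := fun y => (⟨y.1.erase y.2, y.2⟩ : Σ _A : Finset (Fin n), Fin n))
  · rintro ⟨A, i⟩ hx
    simp only [Finset.mem_sigma, Finset.mem_powersetCard_univ, Finset.mem_compl] at hx
    simp only [Finset.mem_sigma, Finset.mem_powersetCard_univ]
    exact ⟨by rw [Finset.card_insert_of_notMem hx.2, hx.1], Finset.mem_insert_self _ _⟩
  · rintro ⟨B, i⟩ hy
    simp only [Finset.mem_sigma, Finset.mem_powersetCard_univ] at hy
    simp only [Finset.mem_sigma, Finset.mem_powersetCard_univ, Finset.mem_compl]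
    exact ⟨by rw [Finset.card_erase_of_mem hy.2, hy.1]; rfl, Finset.notMem_erase _ _⟩
  · rintro ⟨A, i⟩ hx
    simp only [Finset.mem_sigma, Finset.mem_powersetCard_univ, Finset.mem_compl] at hx
    simp only [Sigma.mk.inj_iff, heq_eq_eq, and_true]
    exact Finset.erase_insert hx.2
  · rintro ⟨B, i⟩ hy
    simp only [Finset.mem_sigma, Finset.mem_powersetCard_univ] at hy
    simp only [Sigma.mk.inj_iff, heq_eq_eq, and_true]
    exact Finset.insert_erase hy.2
  · rintro ⟨A, i⟩ _
    rfl

end Comb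

section Key
variable {Ω E : Type*} [Fintype Ω] [Fintype E] [DecidableEq E] {n : ℕ}

lemma key_ineq (p : Ω → ℝ) (hp0 : ∀ ω, 0 ≤ p ω) (hp1 : ∑ ω, p ω = 1)
    (X : Fin n → Ω → E) (a b : ℕ) (hn : n = a + b + 2) :
    ((b:ℝ)+2)*((b:ℝ)+1) * (∑ α ∈ powersetCard a (univ : Finset (Fin n)), jointEntropy p X α)
    + ((a:ℝ)+1)*((a:ℝ)+2) *
        (∑ α ∈ powersetCard (a+2) (univ : Finset (Fin n)), jointEntropy p X α)
    ≤ 2*(((a:ℝ)+1)*((b:ℝ)+1)) *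
        (∑ α ∈ powersetCard (a+1) (univ : Finset (Fin n)), jointEntropy p X α) := by
  set F : Finset (Fin n) → ℝ := jointEntropy p X with hF
  have hc1 : ∀ A ∈ powersetCard a (univ : Finset (Fin n)), Aᶜ.card = b + 2 := by
    intro A hA
    rw [Finset.card_compl, Finset.mem_powersetCard_univ.1 hA, Fintype.card_fin]
    omega
  have hc2 : ∀ A ∈ powersetCard a (univ : Finset (Fin n)), ∀ i ∈ Aᶜ,
      ((insert i A)ᶜ).card = b + 1 := by
    intro A hA i hi
    rw [Finset.card_compl, Finset.card_insert_of_notMem (Finset.mem_compl.1 hi),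
      Finset.mem_powersetCard_univ.1 hA, Fintype.card_fin]
    omega
  have main : ∑ A ∈ powersetCard a (univ : Finset (Fin n)), ∑ i ∈ Aᶜ, ∑ j ∈ (insert i A)ᶜ,
        (F (insert j (insert i A)) + F A)
      ≤ ∑ A ∈ powersetCard a (univ : Finset (Fin n)), ∑ i ∈ Aᶜ, ∑ j ∈ (insert i A)ᶜ,
        (F (insert i A) + F (insert j A)) := by
    refine Finset.sum_le_sum fun A hA => Finset.sum_le_sum fun i hi =>
      Finset.sum_le_sum fun j hj => ?_
    have hiA : i ∉ A := Finset.mem_compl.1 hi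
    have hj' : j ∉ insert i A := Finset.mem_compl.1 hj
    have hjA : j ∉ A := fun hmem => hj' (Finset.mem_insert_of_mem hmem)
    have hij : j ≠ i := fun hmem => hj' (hmem ▸ Finset.mem_insert_self i A)
    have hunion : insert i A ∪ insert j A = insert j (insert i A) := by
      ext x
      simp only [Finset.mem_union, Finset.mem_insert]
      tauto
    have hinter : insert i A ∩ insert j A = A := by
      ext x
      simp only [Finset.mem_inter, Finset.mem_insert]
      constructor
      · rintro ⟨h1 | h1, h2 | h2⟩
        · subst h1; exact absurd h2.symm hij
        · exact h2
        · exact h1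
        · exact h1
      · exact fun hmem => ⟨Or.inr hmem, Or.inr hmem⟩
    have := jointEntropy_submod p hp0 hp1 X (insert i A) (insert j A)
    rw [hunion, hinter] at this
    exact this
  simp only [Finset.sum_add_distrib] at main
  have P1 : ∑ A ∈ powersetCard a (univ : Finset (Fin n)), ∑ i ∈ Aᶜ, ∑ j ∈ (insert i A)ᶜ,
        F (insert j (insert i A))
      = ((a:ℝ)+1) * (((a:ℝ)+2) * ∑ B ∈ powersetCard (a+2) (univ : Finset (Fin n)), F B) := by
    have r1 := sum_insert_reindex (n := n) a (fun C => ∑ j ∈ Cᶜ, F (insert j C))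
    have r2 := sum_insert_reindex (n := n) (a+1) F
    norm_num at r2
    calc ∑ A ∈ powersetCard a (univ : Finset (Fin n)), ∑ i ∈ Aᶜ, ∑ j ∈ (insert i A)ᶜ,
          F (insert j (insert i A))
        = ((a:ℝ)+1) * ∑ C ∈ powersetCard (a+1) (univ : Finset (Fin n)),
            ∑ j ∈ Cᶜ, F (insert j C) := r1
      _ = ((a:ℝ)+1) * (((a:ℝ)+2) * ∑ B ∈ powersetCard (a+2) (univ : Finset (Fin n)), F B) := by
          rw [r2]
          have e1 : ((a:ℕ) + 1 + 1) = a + 2 := rfl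
          simp only [e1]
          ring
  have P2 : ∑ A ∈ powersetCard a (univ : Finset (Fin n)), ∑ i ∈ Aᶜ, ∑ j ∈ (insert i A)ᶜ, F A
      = ((b:ℝ)+2) * (((b:ℝ)+1) * ∑ A ∈ powersetCard a (univ : Finset (Fin n)), F A) := by
    calc ∑ A ∈ powersetCard a (univ : Finset (Fin n)), ∑ i ∈ Aᶜ, ∑ j ∈ (insert i A)ᶜ, F A
        = ∑ A ∈ powersetCard a (univ : Finset (Fin n)), ∑ i ∈ Aᶜ, ((b:ℝ)+1) * F A := by
          refine Finset.sum_congr rfl fun A hA => Finset.sum_congr rfl fun i hi => ?_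
          rw [Finset.sum_const, hc2 A hA i hi, nsmul_eq_mul]
          push_cast; ring
      _ = ∑ A ∈ powersetCard a (univ : Finset (Fin n)), ((b:ℝ)+2) * (((b:ℝ)+1) * F A) := by
          refine Finset.sum_congr rfl fun A hA => ?_
          rw [Finset.sum_const, hc1 A hA, nsmul_eq_mul]
          push_cast; ring
      _ = ((b:ℝ)+2) * (((b:ℝ)+1) * ∑ A ∈ powersetCard a (univ : Finset (Fin n)), F A) := by
          rw [← Finset.mul_sum, ← Finset.mul_sum]
  have P3 : ∑ A ∈ powersetCard a (univ : Finset (Fin n)), ∑ i ∈ Aᶜ, ∑ j ∈ (insert i A)ᶜ,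
        F (insert i A)
      = ((b:ℝ)+1) * (((a:ℝ)+1) * ∑ B ∈ powersetCard (a+1) (univ : Finset (Fin n)), F B) := by
    calc ∑ A ∈ powersetCard a (univ : Finset (Fin n)), ∑ i ∈ Aᶜ, ∑ j ∈ (insert i A)ᶜ,
          F (insert i A)
        = ∑ A ∈ powersetCard a (univ : Finset (Fin n)), ∑ i ∈ Aᶜ, ((b:ℝ)+1) * F (insert i A) := by
          refine Finset.sum_congr rfl fun A hA => Finset.sum_congr rfl fun i hi => ?_
          rw [Finset.sum_const, hc2 A hA i hi, nsmul_eq_mul]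
          push_cast; ring
      _ = ((b:ℝ)+1) * ∑ A ∈ powersetCard a (univ : Finset (Fin n)), ∑ i ∈ Aᶜ, F (insert i A) := by
          rw [Finset.mul_sum]
          exact Finset.sum_congr rfl fun A _ => (Finset.mul_sum _ _ _).symm
      _ = ((b:ℝ)+1) * (((a:ℝ)+1) * ∑ B ∈ powersetCard (a+1) (univ : Finset (Fin n)), F B) := by
          rw [sum_insert_reindex (n := n) a F]
  have P4 : ∑ A ∈ powersetCard a (univ : Finset (Fin n)), ∑ i ∈ Aᶜ, ∑ j ∈ (insert i A)ᶜ,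
        F (insert j A)
      = ((b:ℝ)+1) * (((a:ℝ)+1) * ∑ B ∈ powersetCard (a+1) (univ : Finset (Fin n)), F B) := by
    calc ∑ A ∈ powersetCard a (univ : Finset (Fin n)), ∑ i ∈ Aᶜ, ∑ j ∈ (insert i A)ᶜ,
          F (insert j A)
        = ∑ A ∈ powersetCard a (univ : Finset (Fin n)), ((b:ℝ)+1) * ∑ j ∈ Aᶜ, F (insert j A) := by
          refine Finset.sum_congr rfl fun A hA => ?_
          have herase : ∀ i ∈ Aᶜ, ∑ j ∈ (insert i A)ᶜ, F (insert j A)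
              = (∑ j ∈ Aᶜ, F (insert j A)) - F (insert i A) := by
            intro i hi
            rw [Finset.compl_insert]
            exact Finset.sum_erase_eq_sub hi
          rw [Finset.sum_congr rfl herase, Finset.sum_sub_distrib, Finset.sum_const, hc1 A hA,
            nsmul_eq_mul]
          push_cast; ring
      _ = ((b:ℝ)+1) * ∑ A ∈ powersetCard a (univ : Finset (Fin n)), ∑ j ∈ Aᶜ, F (insert j A) := by
          rw [Finset.mul_sum]
      _ = ((b:ℝ)+1) * (((a:ℝ)+1) * ∑ B ∈ powersetCard (a+1) (univ : Finset (Fin n)), F B) := by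
          rw [sum_insert_reindex (n := n) a F]
  rw [P1, P2, P3, P4] at main
  nlinarith [main]

end Key

/-- For any discrete random vector, the average entropy function (with the
conventions `h_0 = 0`, `h_{n+1} = h_n`) has nonpositive second differences:
`h_{m-1} - 2h_m + h_{m+1} ≤ 0` for `m = 1,…,n`. -/
theorem average_entropy_concave (n : ℕ) (Ω E : Type) [Fintype Ω] [Fintype E] [DecidableEq E]
    (p : Ω → ℝ) (hp0 : ∀ ω, 0 ≤ p ω) (hp1 : ∑ ω, p ω = 1)
    (X : Fin n → Ω → E) (h : ℕ → ℝ)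
    (hdef : ∀ m, 1 ≤ m → m ≤ n → h m = ((n.choose m : ℝ))⁻¹ *
      ∑ α ∈ powersetCard m (univ : Finset (Fin n)), jointEntropy p X α)
    (h0 : h 0 = 0) (hn1 : h (n + 1) = h n) :
    ∀ m, 1 ≤ m → m ≤ n → h (m - 1) - 2 * h m + h (m + 1) ≤ 0 := by
  set S : ℕ → ℝ := fun k => ∑ α ∈ powersetCard k (univ : Finset (Fin n)), jointEntropy p X α
    with hS_def
  have hS : ∀ k, k ≤ n → h k = ((n.choose k : ℝ))⁻¹ * S k := by
    intro k hk
    rcases Nat.eq_zero_or_pos k with rfl | hk1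
    · have hS0 : S 0 = 0 := by
        rw [hS_def]
        simp only [Finset.powersetCard_zero, Finset.sum_singleton]
        exact jointEntropy_empty p hp1 X
      rw [h0, hS0, Nat.choose_zero_right]
      simp
    · exact hdef k hk1 hk
  have huniv : powersetCard n (univ : Finset (Fin n)) = {univ} := by
    have := Finset.powersetCard_self (univ : Finset (Fin n))
    simpa using this
  intro m hm1 hmn
  rcases eq_or_lt_of_le hmn with rfl | hlt
  · -- m = n : monotonicity
    rw [hn1]
    have hn0 : 0 < m := hm1
    have hSn : S m = jointEntropy p X (univ : Finset (Fin m)) := by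
      rw [hS_def]
      simp only [huniv, Finset.sum_singleton]
    have hchoose : m.choose (m - 1) = m := by
      rw [Nat.choose_symm hm1, Nat.choose_one_right]
    have hmono : S (m - 1) ≤ (m : ℝ) * jointEntropy p X (univ : Finset (Fin m)) := by
      calc S (m - 1) ≤ ∑ _α ∈ powersetCard (m-1) (univ : Finset (Fin m)),
            jointEntropy p X (univ : Finset (Fin m)) := by
            apply Finset.sum_le_sum
            intro α _
            exact jointEntropy_mono p hp0 X (Finset.subset_univ α)
        _ = (m : ℝ) * jointEntropy p X (univ : Finset (Fin m)) := by
            rw [Finset.sum_const, Finset.card_powersetCard, Finset.card_univ, Fintype.card_fin,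
              Nat.choose_symm hm1, Nat.choose_one_right, nsmul_eq_mul]
    have e1 : h (m - 1) = ((m:ℝ))⁻¹ * S (m - 1) := by
      rw [hS (m-1) (by omega), hchoose]
    have e2 : h m = jointEntropy p X (univ : Finset (Fin m)) := by
      rw [hS m le_rfl, Nat.choose_self, hSn]
      simp
    have hmpos : (0:ℝ) < (m:ℝ) := by exact_mod_cast hn0
    have : h (m - 1) ≤ h m := by
      rw [e1, e2]
      rw [inv_mul_le_iff₀ hmpos]
      exact hmono
    linarith
  · -- m < n
    obtain ⟨a, ha⟩ : ∃ a, m = a + 1 := ⟨m - 1, by omega⟩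
    obtain ⟨b, hb⟩ : ∃ b, n = a + b + 2 := ⟨n - m - 1, by omega⟩
    subst ha
    have key := key_ineq p hp0 hp1 X a b hb
    set x := S a
    set y := S (a + 1)
    set z := S (a + 2)
    set c1 := ((n.choose a : ℕ) : ℝ) with hc1_def
    set c2 := ((n.choose (a+1) : ℕ) : ℝ) with hc2_def
    set c3 := ((n.choose (a+2) : ℕ) : ℝ) with hc3_def
    have hc1pos : 0 < c1 := by
      rw [hc1_def]; exact_mod_cast Nat.choose_pos (by omega)
    have hc2pos : 0 < c2 := by
      rw [hc2_def]; exact_mod_cast Nat.choose_pos (by omega)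
    have hc3pos : 0 < c3 := by
      rw [hc3_def]; exact_mod_cast Nat.choose_pos (by omega)
    have E1 : c2 * ((a:ℝ)+1) = c1 * ((b:ℝ)+2) := by
      have := Nat.choose_succ_right_eq n a
      have hna : n - a = b + 2 := by omega
      rw [hna] at this
      rw [hc1_def, hc2_def]
      exact_mod_cast this
    have E2 : c3 * ((a:ℝ)+2) = c2 * ((b:ℝ)+1) := by
      have := Nat.choose_succ_right_eq n (a+1)
      have hna : n - (a+1) = b + 1 := by omega
      rw [hna] at this
      rw [hc2_def, hc3_def]
      have h2 : (a:ℝ) + 2 = ((a + 1 + 1 : ℕ) : ℝ) := by push_cast; ring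
      rw [h2]
      exact_mod_cast this
    have hx : h (a + 1 - 1) = c1⁻¹ * x := by
      have : a + 1 - 1 = a := by omega
      rw [this, hS a (by omega)]
    have hy : h (a + 1) = c2⁻¹ * y := hS (a+1) (by omega)
    have hz : h (a + 1 + 1) = c3⁻¹ * z := hS (a+2) (by omega)
    rw [hx, hy, hz]
    have num : c2*c3*x + c1*c2*z ≤ 2*(c1*c3*y) := by
      have hpos : (0:ℝ) < ((a:ℝ)+1)*((b:ℝ)+1) := by positivity
      rw [← mul_le_mul_iff_right₀ hpos]
      have lhs_eq : ((a:ℝ)+1)*((b:ℝ)+1) * (c2*c3*x + c1*c2*z)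
          = c1*c3*((((b:ℝ)+2)*((b:ℝ)+1))*x + (((a:ℝ)+1)*((a:ℝ)+2))*z) := by
        linear_combination (((b:ℝ)+1)*c3*x) * E1 - (((a:ℝ)+1)*c1*z) * E2
      rw [lhs_eq]
      have step : (((b:ℝ)+2)*((b:ℝ)+1))*x + (((a:ℝ)+1)*((a:ℝ)+2))*z
          ≤ 2*(((a:ℝ)+1)*((b:ℝ)+1))*y := key
      have step2 := mul_le_mul_of_nonneg_left step (show (0:ℝ) ≤ c1*c3 by positivity)
      refine le_trans step2 (le_of_eq ?_)
      ring
    have hrw : c1⁻¹ * x - 2*(c2⁻¹*y) + c3⁻¹*z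
        = (c2*c3*x - 2*(c1*c3*y) + c1*c2*z) / (c1*c2*c3) := by
      field_simp
    rw [hrw]
    apply div_nonpos_of_nonpos_of_nonneg
    · linarith
    · positivity
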